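/- With the notation of the paper (in particular $f_L(x) = \pi_L x + x^{q_L}$, $f_K(x) = \pi_K x + x^{q_K}$, $q_L \geq 3$, $\pi_K^2 \mid \pi_L$, and $\pi_L \mid \alpha$ where $\alpha = q_K/\pi_L^{f_{K/L}}$): define $T(f) = \big(\sum^{LT,L}_{z \in \mathfrak{F}_0(F_K)} f(x\oplus_K z)\big) \ominus_L [\alpha]_L(f([\pi_K]_K(x)))$ for $f \in \mathcal{O}_K[[x]]$ with $\pi_K \mid f(0)$. If $\pi_K \mid f(x)$ in $\mathcal{O}_K[[x]]$, then $\pi_K^2 \mid T(f)$. -/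

import Mathlib

open PowerSeries Finset

noncomputable section

namespace Coleman

variable {R : Type*} [CommRing R]

/-- The coefficient of `x^i y^j` in a two-variable power series. -/
def mcoeff (R : Type*) [CommRing R] (i j : ℕ) (F : MvPowerSeries (Fin 2) R) : R :=
  MvPowerSeries.coeff (Finsupp.single 0 i + Finsupp.single 1 j) F

/-- Exact composition `g(h)`; this is the correct composite when `h` has zero constant term. -/
def pcomp (g h : R⟦X⟧) : R⟦X⟧ :=
  PowerSeries.mk fun n => ∑ k ∈ range (n + 1), coeff k g * coeff n (h ^ k)

/-- Exact substitution `F(a,b)`; correct when `a`, `b` have zero constant term. -/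
def pcomp2 (F : MvPowerSeries (Fin 2) R) (a b : R⟦X⟧) : R⟦X⟧ :=
  PowerSeries.mk fun n => ∑ i ∈ range (n + 1), ∑ j ∈ range (n + 1),
    mcoeff R i j F * coeff n (a ^ i * b ^ j)

/-- Total degree of a bi-exponent. -/
def mdeg (d : Fin 2 →₀ ℕ) : ℕ := d 0 + d 1

/-- `g(F)` for a two-variable `F` with zero constant term. -/
def mcomp1 (g : R⟦X⟧) (F : MvPowerSeries (Fin 2) R) : MvPowerSeries (Fin 2) R :=
  fun d => ∑ k ∈ range (mdeg d + 1), coeff k g * MvPowerSeries.coeff d (F ^ k)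

/-- `F(A,B)` for two-variable `A`, `B` with zero constant term. -/
def mcomp2 (F A B : MvPowerSeries (Fin 2) R) : MvPowerSeries (Fin 2) R :=
  fun d => ∑ i ∈ range (mdeg d + 1), ∑ j ∈ range (mdeg d + 1),
    mcoeff R i j F * MvPowerSeries.coeff d (A ^ i * B ^ j)

/-- The one-variable series `g` viewed as a series in the variable `i` only. -/
def embedVar (i : Fin 2) (g : R⟦X⟧) : MvPowerSeries (Fin 2) R :=
  fun d => if d = Finsupp.single i (d i) then coeff (d i) g else 0

/-- `S = g(a)`, where the substitution is understood as a `t`-adic (coefficientwise) limit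
of the partial sums `∑_{k<M} g_k a^k`. -/
def IsSubst (t : R) (g a S : R⟦X⟧) : Prop :=
  ∀ n N : ℕ, ∃ M₀ : ℕ, ∀ M ≥ M₀,
    t ^ N ∣ (coeff n S - ∑ k ∈ range M, coeff k g * coeff n (a ^ k))

/-- `S = F(a,b)`, as a `t`-adic coefficientwise limit of partial sums. -/
def IsSubst2 (t : R) (F : MvPowerSeries (Fin 2) R) (a b S : R⟦X⟧) : Prop :=
  ∀ n N : ℕ, ∃ M₀ : ℕ, ∀ M ≥ M₀,
    t ^ N ∣ (coeff n S - ∑ i ∈ range M, ∑ j ∈ range M,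
      mcoeff R i j F * coeff n (a ^ i * b ^ j))

/-- `S` is the formal-group (`F`-) sum of the list `l` of power series. -/
def IsLTSum (t : R) (F : MvPowerSeries (Fin 2) R) : List R⟦X⟧ → R⟦X⟧ → Prop
  | [], S => S = 0
  | a :: l, S => ∃ T, IsLTSum t F l T ∧ IsSubst2 t F a T S

/-- `v = g(u)`, as a `t`-adic limit of partial sums. -/
def IsEvalAt (t : R) (g : R⟦X⟧) (u v : R) : Prop :=
  ∀ N : ℕ, ∃ M₀, ∀ M ≥ M₀, t ^ N ∣ (v - ∑ k ∈ range M, coeff k g * u ^ k)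

/-- `w = F(u,v)`, as a `t`-adic limit of partial sums. -/
def IsEval2At (t : R) (F : MvPowerSeries (Fin 2) R) (u v w : R) : Prop :=
  ∀ N : ℕ, ∃ M₀, ∀ M ≥ M₀,
    t ^ N ∣ (w - ∑ i ∈ range M, ∑ j ∈ range M, mcoeff R i j F * u ^ i * v ^ j)

/-- `F` is a (one-dimensional, commutative) formal group law. -/
structure IsFGL (F : MvPowerSeries (Fin 2) R) : Prop where
  unitX : ∀ n, mcoeff R n 0 F = if n = 1 then 1 else 0
  unitY : ∀ n, mcoeff R 0 n F = if n = 1 then 1 else 0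
  comm : ∀ i j, mcoeff R i j F = mcoeff R j i F

/-- `f` is a Lubin-Tate series for the uniformizer `π` and residue cardinality `q`:
`f ≡ πx mod x²` and `f ≡ x^q mod π`. -/
structure IsLT (π : R) (q : ℕ) (f : R⟦X⟧) : Prop where
  const : constantCoeff f = 0
  lin : coeff 1 f = π
  frob : ∀ n, π ∣ (coeff n f - if n = q then 1 else 0)

/-- `F` is the Lubin-Tate formal group law attached to `f`:
`F ≡ x + y mod deg 2` and `f(F(x,y)) = F(f(x),f(y))`. -/
structure IsLTFGL (π : R) (q : ℕ) (f : R⟦X⟧) (F : MvPowerSeries (Fin 2) R) : Prop where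
  isFGL : IsFGL F
  isLT : IsLT π q f
  commf : mcomp1 f F = mcomp2 F (embedVar 0 f) (embedVar 1 f)

/-- `g = [a]`, the Lubin-Tate endomorphism attached to `a`: `g ≡ a x mod x²` and `f∘g = g∘f`. -/
structure IsBracket (f : R⟦X⟧) (a : R) (g : R⟦X⟧) : Prop where
  const : constantCoeff g = 0
  lin : coeff 1 g = a
  commf : pcomp f g = pcomp g f

/-- Every coefficient of `f` is divisible by `c`. -/
def DvdAll (c : R) (f : R⟦X⟧) : Prop := ∀ n, c ∣ coeff n f


section Rel

variable {OK A : Type*} [CommRing OK] [CommRing A] [Algebra OK A]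

/-- `Rr i = r(x ⊕_K z_i)`: there are series `B i = F_K(x, z_i)` (substitution of the constant
`z_i` into the second variable of `F_K`, as an adic limit) with `Rr i = r(B i)` (again as an
adic limit, since `B i` has nonzero small constant term). -/
def IsOplusList (ϖ : A) (FKm : MvPowerSeries (Fin 2) A) {q : ℕ} (zs : Fin q → A)
    (r : OK⟦X⟧) (Rr : Fin q → A⟦X⟧) : Prop :=
  ∃ B : Fin q → A⟦X⟧,
    (∀ i, IsSubst2 ϖ FKm X (PowerSeries.C (zs i)) (B i)) ∧
    ∀ i, IsSubst ϖ (PowerSeries.map (algebraMap OK A) r) (B i) (Rr i)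

/-- `r ∈ 𝒜^α_{L,K}`: `|r(0)| < 1` and
`∑^{LT,L}_{z ∈ 𝔉₀(F_K)} r(x ⊕_K z) = [α]_L(r([π_K]_K(x)))`, where `bα` is (the image in
`A⟦x⟧` of) the endomorphism `[α]_L` and `fK = [π_K]_K`. -/
def MemA (ϖ : A) (FLm FKm : MvPowerSeries (Fin 2) A) {q : ℕ} (zs : Fin q → A)
    (fK : OK⟦X⟧) (bα : A⟦X⟧) (πK : OK) (r : OK⟦X⟧) : Prop :=
  πK ∣ constantCoeff r ∧
  ∃ (Rr : Fin q → A⟦X⟧) (S RHS : A⟦X⟧),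
    IsOplusList ϖ FKm zs r Rr ∧
    IsLTSum ϖ FLm (List.ofFn Rr) S ∧
    IsSubst ϖ bα (PowerSeries.map (algebraMap OK A) (pcomp r fK)) RHS ∧
    S = RHS

/-- `h ∈ 𝒟_{L,K}`: `∑^{LT,L}_{z ∈ 𝔉₀(F_K)} h(x ⊕_K z) = 0`. -/
def MemD (ϖ : A) (FLm FKm : MvPowerSeries (Fin 2) A) {q : ℕ} (zs : Fin q → A)
    (h : OK⟦X⟧) : Prop :=
  ∃ (Rh : Fin q → A⟦X⟧) (S : A⟦X⟧),
    IsOplusList ϖ FKm zs h Rh ∧ IsLTSum ϖ FLm (List.ofFn Rh) S ∧ S = 0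

/-- `φr = φ^α_{L,K}(r) = [q_K/α]_L(r(x)) ⊖_L r([π_K]_K(x))`, where `bq` is (the image of)
`[q_K/α]_L` and `ιm` (the image of) the formal inverse series of `F_L`. -/
def IsPhi (ϖ : A) (FLm : MvPowerSeries (Fin 2) A) (fK : OK⟦X⟧) (bq ιm : A⟦X⟧)
    (r : OK⟦X⟧) (φr : A⟦X⟧) : Prop :=
  ∃ a m : A⟦X⟧,
    IsSubst ϖ bq (PowerSeries.map (algebraMap OK A) r) a ∧
    IsSubst ϖ ιm (PowerSeries.map (algebraMap OK A) (pcomp r fK)) m ∧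
    IsSubst2 ϖ FLm a m φr

/-- `T = 𝓛_{F_K}(g)`, Coleman's trace operator:
`T([π_K]_K(x)) = ∑_{z ∈ 𝔉₀(F_K)} g(x ⊕_K z)` (ordinary sum). -/
def IsTraceOf (ϖ : A) (FKm : MvPowerSeries (Fin 2) A) {q : ℕ} (zs : Fin q → A)
    (fK : OK⟦X⟧) (g T : OK⟦X⟧) : Prop :=
  ∃ Rg : Fin q → A⟦X⟧, IsOplusList ϖ FKm zs g Rg ∧
    PowerSeries.map (algebraMap OK A) (pcomp T fK) = ∑ i, Rg i

end Rel

section T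

variable {OK A : Type*} [CommRing OK] [CommRing A] [Algebra OK A]

/-- `Tf = T(f) = (∑^{LT,L}_{z ∈ 𝔉₀(F_K)} f(x ⊕_K z)) ⊖_L [α]_L(f([π_K]_K(x)))`,
where `bα` is (the image of) `[α]_L` and `ι` (the image of) the formal inverse of `F_L`. -/
def IsT (ϖ : A) (FLm FKm : MvPowerSeries (Fin 2) A) {q : ℕ} (zs : Fin q → A)
    (fK : OK⟦X⟧) (bα ι : A⟦X⟧) (f : OK⟦X⟧) (Tf : A⟦X⟧) : Prop :=
  ∃ (Rf : Fin q → A⟦X⟧) (S aR m : A⟦X⟧),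
    IsOplusList ϖ FKm zs f Rf ∧
    IsLTSum ϖ FLm (List.ofFn Rf) S ∧
    IsSubst ϖ bα (PowerSeries.map (algebraMap OK A) (pcomp f fK)) aR ∧
    IsSubst ϖ ι aR m ∧
    IsSubst2 ϖ FLm S m Tf

end T

section Aux

variable {A : Type*} [CommRing A]

/-- An element approximable to arbitrary `ϖ`-adic precision by multiples of `d` is a multiple
of `d`, provided `d` divides some power of `ϖ`. -/
lemma dvd_of_approx {ϖ d x : A} {t : ℕ} (hdt : d ∣ ϖ ^ t)
    (h : ∀ N : ℕ, ∃ s : A, d ∣ s ∧ ϖ ^ N ∣ x - s) : d ∣ x := by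
  obtain ⟨s, hs, hd⟩ := h t
  have : d ∣ x - s := hdt.trans hd
  simpa using dvd_add this hs

lemma eq_zero_of_forall_pow_dvd [IsDomain A] [IsDiscreteValuationRing A] {ϖ x : A}
    (hϖ : Irreducible ϖ) (h : ∀ N : ℕ, ϖ ^ N ∣ x) : x = 0 := by
  by_contra hx
  obtain ⟨n, u, rfl⟩ := IsDiscreteValuationRing.eq_unit_mul_pow_irreducible hx hϖ
  have h1 : (ϖ : A) ^ n * ϖ ∣ ϖ ^ n * (u : A) := by
    have := h (n + 1); rwa [pow_succ, mul_comm (u : A)] at this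
  have h2 : (ϖ : A) ∣ (u : A) :=
    (mul_dvd_mul_iff_left (pow_ne_zero n hϖ.ne_zero)).mp h1
  exact hϖ.not_isUnit (isUnit_of_dvd_unit h2 u.isUnit)

lemma dvdAll_mul_of_left {c : A} {f g : A⟦X⟧} (h : DvdAll c f) : DvdAll c (f * g) := by
  intro n
  rw [PowerSeries.coeff_mul]
  exact Finset.dvd_sum fun p _ => (h p.1).mul_right _

lemma dvdAll_mul_of_right {c : A} {f g : A⟦X⟧} (h : DvdAll c g) : DvdAll c (f * g) := by
  intro n
  rw [PowerSeries.coeff_mul]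
  exact Finset.dvd_sum fun p _ => (h p.2).mul_left _

lemma dvdAll_mul_mul {c d : A} {f g : A⟦X⟧} (hf : DvdAll c f) (hg : DvdAll d g) :
    DvdAll (c * d) (f * g) := by
  intro n
  rw [PowerSeries.coeff_mul]
  exact Finset.dvd_sum fun p _ => mul_dvd_mul (hf p.1) (hg p.2)

lemma dvdAll_pow {c : A} {f : A⟦X⟧} (h : DvdAll c f) {k : ℕ} (hk : 1 ≤ k) :
    DvdAll c (f ^ k) := by
  obtain ⟨j, rfl⟩ := Nat.exists_eq_add_of_le hk
  rw [add_comm, pow_succ]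
  exact dvdAll_mul_of_right h

lemma dvdAll_pow_sq {e : A} {f : A⟦X⟧} (h : DvdAll e f) {k : ℕ} (hk : 2 ≤ k) :
    DvdAll (e * e) (f ^ k) := by
  obtain ⟨j, rfl⟩ := Nat.exists_eq_add_of_le hk
  rw [add_comm, pow_succ, pow_succ]
  exact dvdAll_mul_mul (dvdAll_mul_of_right h) h

lemma mcoeff_map {S : Type*} [CommRing S] (φ : A →+* S) (F : MvPowerSeries (Fin 2) A)
    (i j : ℕ) : mcoeff S i j (MvPowerSeries.map (σ := Fin 2) φ F) = φ (mcoeff A i j F) := by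
  simp [mcoeff, MvPowerSeries.coeff_map]

lemma coeff_X_pow_mul_C_pow (i j m : ℕ) (a : A) :
    coeff m ((X : A⟦X⟧) ^ i * PowerSeries.C a ^ j) = if m = i then a ^ j else 0 := by
  rw [← map_pow, mul_comm, PowerSeries.coeff_C_mul, PowerSeries.coeff_X_pow]
  split_ifs <;> simp

/-- If `ϖ^N` divides the first `n+1` coefficients of `B - β`, it divides the `n`-th coefficient
of `B^k - β^k`. -/
lemma coeff_pow_sub_pow_dvd {B β : A⟦X⟧} {w : A} {n : ℕ}
    (h : ∀ m, m ≤ n → w ∣ coeff m (B - β)) (k : ℕ) :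
    w ∣ coeff n (B ^ k - β ^ k) := by
  obtain ⟨g, hg⟩ := sub_dvd_pow_sub_pow B β k
  rw [hg, PowerSeries.coeff_mul]
  exact Finset.dvd_sum fun p hp =>
    ((h p.1 (Finset.HasAntidiagonal.antidiagonal.fst_le hp)).mul_right _)

/-- Power sums of the roots of `f_K` are divisible by (the image of) `π_K`.  Here `e` denotes
the image of `π_K`, and the roots satisfy `e z + z^q = 0`. -/
lemma powersum_dvd [IsDomain A] {q : ℕ} (hq : 2 ≤ q) (e : A)
    (zs : Fin q → A) (hzinj : Function.Injective zs) {i₀ : Fin q} (hz0 : zs i₀ = 0)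
    (hroot : ∀ i, e * zs i + zs i ^ q = 0) {j : ℕ} (hj : 1 ≤ j) :
    e ∣ ∑ i, zs i ^ j := by
  classical
  set d := q - 1 with hd
  have hq' : q = d + 1 := by omega
  set t : Finset (Fin q) := Finset.univ.erase i₀ with ht
  have hsplit : ∑ i, zs i ^ j = ∑ i ∈ t, zs i ^ j := by
    rw [← Finset.sum_erase_add Finset.univ _ (Finset.mem_univ i₀), hz0,
      zero_pow (by omega), add_zero]
  rw [hsplit]
  have hzd : ∀ i ∈ t, zs i ^ d = -e := by
    intro i hi
    have hne : zs i ≠ 0 := fun h0 => (Finset.ne_of_mem_erase hi) (hzinj (h0.trans hz0.symm))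
    have h1 := hroot i
    rw [hq', pow_succ] at h1
    have h2 : (e + zs i ^ d) * zs i = 0 := by rw [add_mul]; exact h1
    rcases mul_eq_zero.mp h2 with h | h
    · linear_combination h
    · exact absurd h hne
  by_cases hjd : d ≤ j
  · have hterm : ∀ i ∈ t, zs i ^ j = zs i ^ (j - d) * (-e) := by
      intro i hi
      rw [← hzd i hi, ← pow_add]
      congr 1; omega
    rw [Finset.sum_congr rfl hterm, ← Finset.sum_mul]
    exact Dvd.dvd.mul_left (dvd_neg.mpr dvd_rfl) _
  · push_neg at hjd
    have hd2 : 2 ≤ d := by omega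
    set p : Polynomial A := Polynomial.X ^ d + Polynomial.C e with hp
    have hpm : p.Monic := Polynomial.monic_X_pow_add_C e (by omega)
    have hp0 : p ≠ 0 := hpm.ne_zero
    have hroots_mem : ∀ i ∈ t, Polynomial.IsRoot p (zs i) := by
      intro i hi
      simp [hp, Polynomial.IsRoot, hzd i hi]
    set ms : Multiset A := t.val.map zs with hms
    have hnodup : ms.Nodup := t.nodup.map hzinj
    have hle : ms ≤ p.roots := by
      rw [Multiset.le_iff_count]
      intro a
      by_cases ha : a ∈ ms
      · rw [Multiset.count_eq_one_of_mem hnodup ha, Polynomial.count_roots]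
        obtain ⟨i, hi, rfl⟩ := Multiset.mem_map.mp ha
        exact (Polynomial.rootMultiplicity_pos hp0).mpr (hroots_mem i hi)
      · rw [Multiset.count_eq_zero_of_notMem ha]; exact Nat.zero_le _
    set Q : Polynomial A := ∏ i ∈ t, (Polynomial.X - Polynomial.C (zs i)) with hQ
    have hQdvd : Q ∣ p := by
      have h1 := (Multiset.prod_X_sub_C_dvd_iff_le_roots hp0 ms).mpr hle
      have h2 : (ms.map fun a => Polynomial.X - Polynomial.C a).prod = Q := by
        rw [hQ, Finset.prod_eq_multiset_prod, hms, Multiset.map_map]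
        rfl
      rwa [h2] at h1
    have hQm : Q.Monic := Polynomial.monic_prod_of_monic _ _ fun i _ =>
      Polynomial.monic_X_sub_C _
    have htcard : t.card = d := by
      rw [ht, Finset.card_erase_of_mem (Finset.mem_univ _), Finset.card_univ, Fintype.card_fin]
    have hQdeg : Q.natDegree = d := by
      rw [hQ, Polynomial.natDegree_prod_of_monic _ _ fun i _ => Polynomial.monic_X_sub_C _]
      simp [Polynomial.natDegree_X_sub_C, htcard]
    have hpdeg : p.natDegree = d := Polynomial.natDegree_X_pow_add_C
    obtain ⟨r, hr⟩ := hQdvd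
    have hQ0 : Q ≠ 0 := hQm.ne_zero
    have hr0 : r ≠ 0 := by rintro rfl; rw [mul_zero] at hr; exact hp0 hr
    have hrdeg : r.natDegree = 0 := by
      have hnd := Polynomial.natDegree_mul hQ0 hr0
      rw [← hr, hpdeg, hQdeg] at hnd
      omega
    have hr1 : r = 1 := by
      have hrC := Polynomial.eq_C_of_natDegree_eq_zero hrdeg
      have hlc := congrArg Polynomial.leadingCoeff hr
      rw [hpm.leadingCoeff, Polynomial.leadingCoeff_mul, hQm.leadingCoeff, one_mul, hrC,
        Polynomial.leadingCoeff_C] at hlc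
      rw [hrC, ← hlc, map_one]
    have hpQ : p = Q := by rw [hr, hr1, mul_one]
    have hderp : Polynomial.derivative p = Polynomial.C (d : A) * Polynomial.X ^ (d - 1) := by
      rw [hp, Polynomial.derivative_add, Polynomial.derivative_C, add_zero,
        Polynomial.derivative_X_pow]
    have hderQ : Polynomial.derivative Q
        = ∑ i ∈ t, ∏ k ∈ t.erase i, (Polynomial.X - Polynomial.C (zs k)) := by
      rw [hQ, Finset.prod_eq_multiset_prod, Polynomial.derivative_prod]
      rw [Finset.sum_eq_multiset_sum]
      congr 1
      apply Multiset.map_congr rfl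
      intro i hi
      simp only [Function.comp_apply, Polynomial.derivative_sub, Polynomial.derivative_X,
        Polynomial.derivative_C, sub_zero, mul_one]
      rw [Finset.prod_eq_multiset_prod]
      congr 1
    have hG : ∀ i ∈ t, ∏ k ∈ t.erase i, (Polynomial.X - Polynomial.C (zs k))
        = ∑ m ∈ range d, Polynomial.X ^ m * Polynomial.C (zs i) ^ (d - 1 - m) := by
      intro i hi
      have hXz : (Polynomial.X - Polynomial.C (zs i)) ≠ 0 := Polynomial.X_sub_C_ne_zero (zs i)
      apply mul_right_cancel₀ hXz
      rw [Finset.prod_erase_mul t _ hi, ← hQ, ← hpQ, geom_sum₂_mul, ← map_pow, hzd i hi,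
        map_neg, sub_neg_eq_add, hp]
    set mm := d - 1 - j with hmm
    have hmmd : mm < d := by omega
    have hmmne : mm ≠ d - 1 := by omega
    have hjmm : d - 1 - mm = j := by omega
    have key : (∑ i ∈ t, ∏ k ∈ t.erase i, (Polynomial.X - Polynomial.C (zs k)))
        = Polynomial.C (d : A) * Polynomial.X ^ (d - 1) := by
      rw [← hderQ, ← hpQ, hderp]
    have key2 := congrArg (fun P => Polynomial.coeff P mm) key
    rw [Polynomial.finset_sum_coeff] at key2
    have hterm : ∀ i ∈ t,
        Polynomial.coeff (∏ k ∈ t.erase i, (Polynomial.X - Polynomial.C (zs k))) mm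
          = zs i ^ j := by
      intro i hi
      rw [hG i hi, Polynomial.finset_sum_coeff]
      have hsum : ∀ m ∈ range d,
          Polynomial.coeff (Polynomial.X ^ m * Polynomial.C (zs i) ^ (d - 1 - m)) mm
            = if mm = m then zs i ^ (d - 1 - m) else 0 := by
        intro m _
        rw [← map_pow, mul_comm, Polynomial.coeff_C_mul, Polynomial.coeff_X_pow]
        split_ifs <;> simp
      rw [Finset.sum_congr rfl hsum, Finset.sum_ite_eq (range d) mm,
        if_pos (Finset.mem_range.mpr hmmd), hjmm]
    rw [Finset.sum_congr rfl hterm, Polynomial.coeff_C_mul, Polynomial.coeff_X_pow,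
      if_neg hmmne, mul_zero] at key2
    rw [key2]
    exact dvd_zero e

/-- The coefficients of the truncation of `F(x, z)` as polynomials in `z`. -/
def bpolFun (F : MvPowerSeries (Fin 2) A) (M : ℕ) : PowerSeries (Polynomial A) :=
  PowerSeries.mk fun p =>
    if p < M then ∑ q ∈ range M, Polynomial.C (mcoeff A p q F) * Polynomial.X ^ q else 0

lemma eval_coeff_bpolFun (F : MvPowerSeries (Fin 2) A) (M : ℕ) (z : A) (m : ℕ) :
    Polynomial.eval z (coeff m (bpolFun F M)) =
      ∑ i ∈ range M, ∑ j ∈ range M,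
        mcoeff A i j F * coeff m ((X : A⟦X⟧) ^ i * PowerSeries.C z ^ j) := by
  rw [bpolFun, PowerSeries.coeff_mk]
  by_cases hm : m < M
  · rw [if_pos hm]
    have hsum : ∀ i ∈ range M,
        ∑ j ∈ range M, mcoeff A i j F * coeff m ((X : A⟦X⟧) ^ i * PowerSeries.C z ^ j)
          = if m = i then ∑ j ∈ range M, mcoeff A i j F * z ^ j else 0 := by
      intro i _
      by_cases h : m = i
      · simp [coeff_X_pow_mul_C_pow, h]
      · simp [coeff_X_pow_mul_C_pow, h]
    rw [Finset.sum_congr rfl hsum, Finset.sum_ite_eq (range M) m,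
      if_pos (Finset.mem_range.mpr hm), Polynomial.eval_finset_sum]
    simp
  · rw [if_neg hm, Polynomial.eval_zero]
    symm
    apply Finset.sum_eq_zero; intro i hi
    apply Finset.sum_eq_zero; intro j _
    rw [coeff_X_pow_mul_C_pow,
      if_neg (by rintro rfl; exact hm (Finset.mem_range.mp hi)), mul_zero]

/-- Divisibility properties of Lubin-Tate sums: if all summands have coefficients divisible
by `e`, then so does the sum, and the sum agrees with the ordinary sum mod `e²`. -/
lemma ltsum_dvd {ϖ e : A} {T : ℕ} (hT : e * e ∣ ϖ ^ T) {F : MvPowerSeries (Fin 2) A}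
    (hXF : ∀ k, mcoeff A k 0 F = if k = 1 then 1 else 0)
    (hYF : ∀ k, mcoeff A 0 k F = if k = 1 then 1 else 0) :
    ∀ l : List A⟦X⟧, ∀ S : A⟦X⟧, IsLTSum ϖ F l S → (∀ g ∈ l, DvdAll e g) →
      DvdAll e S ∧ ∀ n, e * e ∣ coeff n S - (l.map fun g => coeff n g).sum := by
  have he : e ∣ ϖ ^ T := (dvd_mul_right e e).trans hT
  intro l
  induction l with
  | nil =>
    intro S hS _
    obtain rfl : S = 0 := hS
    exact ⟨fun n => by simp, fun n => by simp⟩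
  | cons a l ih =>
    intro S hS hdvd
    obtain ⟨T', hT', hsub⟩ := hS
    have ha : DvdAll e a := hdvd a (List.mem_cons_self)
    obtain ⟨hTe, hTsum⟩ := ih T' hT' fun g hg => hdvd g (List.mem_cons_of_mem a hg)
    have hmain : ∀ n, e * e ∣ coeff n S - (coeff n a + coeff n T') := by
      intro n
      apply dvd_of_approx hT
      intro N
      obtain ⟨M₀, hM⟩ := hsub n N
      set M := max M₀ 2 with hMdef
      refine ⟨(∑ i ∈ range M, ∑ j ∈ range M, mcoeff A i j F * coeff n (a ^ i * T' ^ j))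
        - (coeff n a + coeff n T'), ?_, ?_⟩
      · set tt : ℕ × ℕ → A := fun p => mcoeff A p.1 p.2 F * coeff n (a ^ p.1 * T' ^ p.2)
          with htdef
        have hrw : ∑ i ∈ range M, ∑ j ∈ range M, mcoeff A i j F * coeff n (a ^ i * T' ^ j)
            = ∑ p ∈ range M ×ˢ range M, tt p := by rw [Finset.sum_product]
        have h2M : 2 ≤ M := le_max_right _ _
        have h10 : ((1, 0) : ℕ × ℕ) ∈ range M ×ˢ range M := by
          rw [Finset.mem_product]
          constructor <;> (rw [Finset.mem_range]; omega)
        have h01 : ((0, 1) : ℕ × ℕ) ∈ (range M ×ˢ range M).erase (1, 0) := by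
          refine Finset.mem_erase.mpr ⟨by simp, ?_⟩
          rw [Finset.mem_product]
          constructor <;> (rw [Finset.mem_range]; omega)
        have ht10 : tt (1, 0) = coeff n a := by simp [htdef, hXF 1]
        have ht01 : tt (0, 1) = coeff n T' := by simp [htdef, hYF 1]
        rw [hrw, ← Finset.sum_erase_add _ tt h10, ← Finset.sum_erase_add _ tt h01, ht10, ht01]
        have hcancel : ∀ x y z : A, x + z + y - (y + z) = x := by intros; ring
        rw [hcancel]
        apply Finset.dvd_sum
        intro p hp
        obtain ⟨hne01, hp'⟩ := Finset.mem_erase.mp hp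
        obtain ⟨hne10, _⟩ := Finset.mem_erase.mp hp'
        rcases p with ⟨i, j⟩
        by_cases hi0 : i = 0
        · subst hi0
          have hj1 : j ≠ 1 := fun h => hne01 (by rw [h])
          simp [htdef, hYF j, hj1]
        · by_cases hj0 : j = 0
          · subst hj0
            have hi1 : i ≠ 1 := fun h => hne10 (by rw [h])
            simp [htdef, hXF i, hi1]
          · exact ((dvdAll_mul_mul (dvdAll_pow ha (by omega)) (dvdAll_pow hTe (by omega)))
              n).mul_left _
      · have h := hM M (le_max_left _ _)
        rw [sub_sub_sub_cancel_right]
        exact h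
    have hSe : DvdAll e S := by
      intro n
      apply dvd_of_approx he
      intro N
      obtain ⟨M₀, hM⟩ := hsub n N
      refine ⟨_, ?_, hM M₀ le_rfl⟩
      apply Finset.dvd_sum; intro i _
      apply Finset.dvd_sum; intro j _
      by_cases hi0 : i = 0
      · subst hi0
        by_cases hj1 : j = 1
        · subst hj1
          have : mcoeff A 0 1 F * coeff n (a ^ 0 * T' ^ 1) = coeff n T' := by
            simp [hYF 1]
          rw [this]; exact hTe n
        · simp [hYF j, hj1]
      · by_cases hj0 : j = 0
        · subst hj0
          by_cases hi1 : i = 1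
          · subst hi1
            have : mcoeff A 1 0 F * coeff n (a ^ 1 * T' ^ 0) = coeff n a := by
              simp [hXF 1]
            rw [this]; exact ha n
          · simp [hXF i, hi1]
        · refine Dvd.dvd.mul_left ?_ _
          exact (dvd_mul_right e e).trans
            ((dvdAll_mul_mul (dvdAll_pow ha (by omega)) (dvdAll_pow hTe (by omega))) n)
    refine ⟨hSe, fun n => ?_⟩
    have hsplit : coeff n S - ((a :: l).map fun g => coeff n g).sum
        = (coeff n S - (coeff n a + coeff n T'))
          + (coeff n T' - (l.map fun g => coeff n g).sum) := by
      rw [List.map_cons, List.sum_cons]; ring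
    rw [hsplit]
    exact dvd_add (hmain n) (hTsum n)

end Aux

/-- **Lemma 2.1.3.** With `f_L(x) = π_L x + x^{q_L}`,
`f_K(x) = π_K x + x^{q_K}`, `q_L ≥ 3`, `π_K² ∣ π_L` and `π_L ∣ α = q_K/π_L^{f_{K/L}}`:
if `π_K ∣ f(x)` in `O_K⟦x⟧`, then `π_K² ∣ T(f)`, where
`T(f) = (∑^{LT,L}_{z ∈ 𝔉₀(F_K)} f(x ⊕_K z)) ⊖_L [α]_L(f([π_K]_K(x)))`. -/
theorem stmt16
    {OL OK A : Type*} [CommRing OL] [IsDomain OL] [IsDiscreteValuationRing OL]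
    [CommRing OK] [IsDomain OK] [IsDiscreteValuationRing OK]
    [CommRing A] [IsDomain A] [IsDiscreteValuationRing A]
    [Algebra OL OK] [Algebra OK A] [Algebra OL A] [IsScalarTower OL OK A]
    (hinj1 : Function.Injective (algebraMap OL OK))
    (hinj2 : Function.Injective (algebraMap OK A))
    (πL : OL) (hπL : Irreducible πL) (πK : OK) (hπK : Irreducible πK)
    (ϖ : A) (hϖ : Irreducible ϖ) [IsAdicComplete (Ideal.span {ϖ}) A]
    (qL qK : ℕ) (hqL : 2 ≤ qL) (hqK : 2 ≤ qK)
    (fL : OL⟦X⟧) (FL : MvPowerSeries (Fin 2) OL) (hFL : IsLTFGL πL qL fL FL)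
    (fK : OK⟦X⟧) (FK : MvPowerSeries (Fin 2) OK) (hFK : IsLTFGL πK qK fK FK)
    -- the roots `𝔉₀(F_K)` of `f_K` (including `0`), inside the maximal ideal of `A`
    (zs : Fin qK → A) (hz0 : ∃ i, zs i = 0)
    (hzroot : ∀ i, IsEvalAt ϖ (PowerSeries.map (algebraMap OK A) fK) (zs i) 0)
    (hzinj : Function.Injective zs) (hzmax : ∀ i, ϖ ∣ zs i)
    (hqL3 : 3 ≤ qL)
    (hfL : fL = PowerSeries.C πL * X + X ^ qL)
    (hfK : fK = PowerSeries.C πK * X + X ^ qK)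
    (hram : πK ^ 2 ∣ algebraMap OL OK πL)
    (fKL : ℕ) (hfKL : qK = qL ^ fKL)
    (α : OL) (hα : α * πL ^ fKL = (qK : OL)) (hπα : πL ∣ α)
    (bα : OL⟦X⟧) (hbα : IsBracket fL α bα)
    (ι : OL⟦X⟧) (hι0 : constantCoeff ι = 0) (hι : pcomp2 FL X ι = 0)
    (f : OK⟦X⟧) (hf0 : πK ∣ constantCoeff f) (hfdvd : DvdAll πK f)
    (Tf : A⟦X⟧)
    (hTf : IsT ϖ (MvPowerSeries.map (σ := Fin 2) (algebraMap OL A) FL)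
      (MvPowerSeries.map (σ := Fin 2) (algebraMap OK A) FK) zs fK
      (PowerSeries.map (algebraMap OL A) bα) (PowerSeries.map (algebraMap OL A) ι) f Tf) :
    DvdAll (algebraMap OK A πK ^ 2) Tf := by
  classical
  set e : A := algebraMap OK A πK with he_def
  have he0 : e ≠ 0 := by
    intro h
    apply hπK.ne_zero
    apply hinj2
    rw [map_zero]
    exact h
  obtain ⟨tA, uA, heA⟩ := IsDiscreteValuationRing.eq_unit_mul_pow_irreducible he0 hϖ
  have he_dvd : e ∣ ϖ ^ tA := by
    refine ⟨(uA⁻¹ : Aˣ), ?_⟩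
    rw [heA, mul_comm (uA : A), mul_assoc, Units.mul_inv, mul_one]
  have hee_dvd : e * e ∣ ϖ ^ (tA + tA) := by
    rw [pow_add]; exact mul_dvd_mul he_dvd he_dvd
  -- exact root equations
  have hrooteq : ∀ i, e * zs i + zs i ^ qK = 0 := by
    intro i
    apply eq_zero_of_forall_pow_dvd hϖ
    intro N
    obtain ⟨M₀, hM⟩ := hzroot i N
    have h1 := hM (max M₀ (qK + 1)) (le_max_left _ _)
    set M := max M₀ (qK + 1) with hMdef
    have hMq : qK + 1 ≤ M := le_max_right _ _
    have hco : ∀ k, coeff k (PowerSeries.map (algebraMap OK A) fK)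
        = (if k = 1 then e else 0) + (if k = qK then 1 else 0) := by
      intro k
      have hck : coeff k fK = (if k = 1 then πK else 0) + (if k = qK then 1 else 0) := by
        rw [hfK, map_add, PowerSeries.coeff_C_mul, PowerSeries.coeff_X,
          PowerSeries.coeff_X_pow]
        split_ifs <;> simp
      rw [PowerSeries.coeff_map, hck, map_add, apply_ite (algebraMap OK A),
        apply_ite (algebraMap OK A), map_one, map_zero]
    have hps : ∑ k ∈ range M, coeff k (PowerSeries.map (algebraMap OK A) fK) * zs i ^ k
        = e * zs i + zs i ^ qK := by
      have hterm : ∀ k ∈ range M,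
          coeff k (PowerSeries.map (algebraMap OK A) fK) * zs i ^ k
            = (if k = 1 then e * zs i ^ k else 0) + (if k = qK then zs i ^ k else 0) := by
        intro k _
        rw [hco k]
        split_ifs <;> ring
      rw [Finset.sum_congr rfl hterm, Finset.sum_add_distrib,
        Finset.sum_ite_eq' (range M) 1, Finset.sum_ite_eq' (range M) qK,
        if_pos (Finset.mem_range.mpr (by omega)), if_pos (Finset.mem_range.mpr (by omega)),
        pow_one]
    rw [hps] at h1
    rw [zero_sub, dvd_neg] at h1
    exact h1
  -- divisibility of α and qK
  have hαOK : πK ^ 2 ∣ algebraMap OL OK α := hram.trans (map_dvd (algebraMap OL OK) hπα)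
  have hqKOK : πK ^ 2 ∣ ((qK : ℕ) : OK) := by
    have h1 : algebraMap OL OK α * algebraMap OL OK πL ^ fKL = ((qK : ℕ) : OK) := by
      rw [← map_pow, ← map_mul, hα, map_natCast]
    rw [← h1]
    exact hαOK.mul_right _
  have heqK : e * e ∣ ((qK : ℕ) : A) := by
    have h1 := map_dvd (algebraMap OK A) hqKOK
    rwa [map_pow, map_natCast, sq] at h1
  have he_qK : e ∣ ((qK : ℕ) : A) := (dvd_mul_right e e).trans heqK
  have hαA : e * e ∣ algebraMap OL A α := by
    have h1 := map_dvd (algebraMap OK A) hαOK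
    rw [map_pow, sq] at h1
    rwa [IsScalarTower.algebraMap_apply OL OK A α]
  -- destructure the definition of Tf
  obtain ⟨Rf, S, aR, m, hOp, hSum, haR, hm, hTfS⟩ := hTf
  obtain ⟨B, hB, hRfB⟩ := hOp
  set fA := PowerSeries.map (algebraMap OK A) f with hfA
  have hfmap : ∀ k, e ∣ coeff k fA := by
    intro k; rw [hfA, PowerSeries.coeff_map]; exact map_dvd _ (hfdvd k)
  have hRf_e : ∀ i, DvdAll e (Rf i) := by
    intro i n
    apply dvd_of_approx he_dvd
    intro N
    obtain ⟨M₀, hM⟩ := hRfB i n N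
    exact ⟨_, Finset.dvd_sum fun k _ => (hfmap k).mul_right _, hM M₀ le_rfl⟩
  -- the series aR and m have coefficients divisible by e²
  have hw : DvdAll e (PowerSeries.map (algebraMap OK A) (pcomp f fK)) := by
    intro n
    rw [PowerSeries.coeff_map]
    apply map_dvd
    rw [pcomp, PowerSeries.coeff_mk]
    exact Finset.dvd_sum fun k _ => (hfdvd k).mul_right _
  have haR_ee : DvdAll (e * e) aR := by
    intro n
    apply dvd_of_approx hee_dvd
    intro N
    obtain ⟨M₀, hM⟩ := haR n N
    refine ⟨_, ?_, hM M₀ le_rfl⟩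
    apply Finset.dvd_sum
    intro k _
    match k with
    | 0 =>
      have h0 : coeff 0 (PowerSeries.map (algebraMap OL A) bα) = 0 := by
        rw [PowerSeries.coeff_map]
        have : coeff 0 bα = 0 := by
          simp [PowerSeries.coeff_zero_eq_constantCoeff, hbα.const]
        rw [this, map_zero]
      rw [h0, zero_mul]
      exact dvd_zero _
    | 1 =>
      have h1 : coeff 1 (PowerSeries.map (algebraMap OL A) bα) = algebraMap OL A α := by
        rw [PowerSeries.coeff_map, hbα.lin]
      rw [h1]
      exact hαA.mul_right _
    | (k2 + 2) =>
      exact ((dvdAll_pow_sq hw (by omega)) n).mul_left _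
  have hm_ee : DvdAll (e * e) m := by
    intro n
    apply dvd_of_approx hee_dvd
    intro N
    obtain ⟨M₀, hM⟩ := hm n N
    refine ⟨_, ?_, hM M₀ le_rfl⟩
    apply Finset.dvd_sum
    intro k _
    match k with
    | 0 =>
      have h0 : coeff 0 (PowerSeries.map (algebraMap OL A) ι) = 0 := by
        rw [PowerSeries.coeff_map]
        have : coeff 0 ι = 0 := by
          simp [PowerSeries.coeff_zero_eq_constantCoeff, hι0]
        rw [this, map_zero]
      rw [h0, zero_mul]
      exact dvd_zero _
    | (k1 + 1) =>
      exact ((dvdAll_pow haR_ee (by omega)) n).mul_left _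
  -- Coleman's lemma: the ordinary sum of the Rf i is divisible by e²
  have hsum_ee : ∀ n, e * e ∣ ∑ i, coeff n (Rf i) := by
    intro n
    apply dvd_of_approx hee_dvd
    intro N
    choose M₁ hM₁ using fun i => hRfB i n N
    choose M₂ hM₂ using fun (i : Fin qK) (m' : ℕ) => hB i m' N
    set Ma := Finset.univ.sup M₁ with hMa
    set Mb := Finset.univ.sup (fun i => (range (n + 1)).sup (M₂ i)) with hMb
    set bp := bpolFun (MvPowerSeries.map (σ := Fin 2) (algebraMap OK A) FK) Mb with hbp
    set P : Polynomial A := ∑ k ∈ range Ma,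
      Polynomial.C (coeff k fA) * coeff n (bp ^ k) with hP
    refine ⟨∑ i, Polynomial.eval (zs i) P, ?_, ?_⟩
    · -- e² divides the approximant, via power sums
      have hPcoeff : ∀ j, e ∣ P.coeff j := by
        intro j
        rw [hP, Polynomial.finset_sum_coeff]
        apply Finset.dvd_sum
        intro k _
        rw [Polynomial.coeff_C_mul]
        exact (hfmap k).mul_right _
      have heval : ∀ i : Fin qK, Polynomial.eval (zs i) P
          = ∑ j ∈ range (P.natDegree + 1), P.coeff j * zs i ^ j := fun i =>
        Polynomial.eval_eq_sum_range _
      rw [Finset.sum_congr rfl fun i _ => heval i, Finset.sum_comm]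
      apply Finset.dvd_sum
      intro j _
      rw [← Finset.mul_sum]
      match j with
      | 0 =>
        have h0 : ∑ i : Fin qK, zs i ^ 0 = ((qK : ℕ) : A) := by simp
        rw [h0]
        exact mul_dvd_mul (hPcoeff 0) he_qK
      | (j1 + 1) =>
        obtain ⟨i₀, hi₀⟩ := hz0
        exact mul_dvd_mul (hPcoeff _)
          (powersum_dvd hqK e zs hzinj hi₀ hrooteq (by omega))
    · -- the approximant is ϖ-adically close
      have hBβ : ∀ (i : Fin qK) (km : ℕ), ϖ ^ N ∣ coeff n ((B i) ^ km
          - (PowerSeries.map (Polynomial.evalRingHom (zs i)) bp) ^ km) := by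
        intro i km
        apply coeff_pow_sub_pow_dvd
        intro m' hm'
        rw [map_sub]
        have hle1 : M₂ i m' ≤ Mb :=
          le_trans (Finset.le_sup (f := M₂ i) (Finset.mem_range.mpr (Nat.lt_succ_of_le hm')))
            (Finset.le_sup (f := fun i => (range (n + 1)).sup (M₂ i)) (Finset.mem_univ i))
        have h1 := hM₂ i m' Mb hle1
        have h2 : coeff m' (PowerSeries.map (Polynomial.evalRingHom (zs i)) bp)
            = ∑ a ∈ range Mb, ∑ b ∈ range Mb,
                mcoeff A a b (MvPowerSeries.map (σ := Fin 2) (algebraMap OK A) FK)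
                  * coeff m' ((X : A⟦X⟧) ^ a * PowerSeries.C (zs i) ^ b) := by
          rw [PowerSeries.coeff_map, hbp]
          exact eval_coeff_bpolFun _ Mb (zs i) m'
        rw [h2]
        exact h1
      have hσ : ∀ i : Fin qK, ϖ ^ N ∣ coeff n (Rf i) - Polynomial.eval (zs i) P := by
        intro i
        have hevalP : Polynomial.eval (zs i) P = ∑ k ∈ range Ma, coeff k fA
            * coeff n ((PowerSeries.map (Polynomial.evalRingHom (zs i)) bp) ^ k) := by
          rw [hP, Polynomial.eval_finset_sum]
          apply Finset.sum_congr rfl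
          intro k _
          rw [Polynomial.eval_mul, Polynomial.eval_C]
          congr 1
          rw [← map_pow, PowerSeries.coeff_map]
          rfl
        have hdecomp : coeff n (Rf i) - Polynomial.eval (zs i) P
            = (coeff n (Rf i) - ∑ k ∈ range Ma, coeff k fA * coeff n ((B i) ^ k))
              + ∑ k ∈ range Ma, coeff k fA * coeff n ((B i) ^ k
                  - (PowerSeries.map (Polynomial.evalRingHom (zs i)) bp) ^ k) := by
          rw [hevalP]
          simp only [map_sub, mul_sub]
          rw [Finset.sum_sub_distrib]
          ring
        rw [hdecomp]
        exact dvd_add (hM₁ i Ma (Finset.le_sup (Finset.mem_univ i)))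
          (Finset.dvd_sum fun k _ => (hBβ i k).mul_left _)
      have hsub : (∑ i, coeff n (Rf i)) - ∑ i, Polynomial.eval (zs i) P
          = ∑ i, (coeff n (Rf i) - Polynomial.eval (zs i) P) := by
        rw [Finset.sum_sub_distrib]
      rw [hsub]
      exact Finset.dvd_sum fun i _ => hσ i
  -- Lubin-Tate sum facts
  have hXF : ∀ k, mcoeff A k 0 (MvPowerSeries.map (σ := Fin 2) (algebraMap OL A) FL)
      = if k = 1 then 1 else 0 := by
    intro k
    rw [mcoeff_map, hFL.isFGL.unitX k, apply_ite (algebraMap OL A), map_one, map_zero]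
  have hYF : ∀ k, mcoeff A 0 k (MvPowerSeries.map (σ := Fin 2) (algebraMap OL A) FL)
      = if k = 1 then 1 else 0 := by
    intro k
    rw [mcoeff_map, hFL.isFGL.unitY k, apply_ite (algebraMap OL A), map_one, map_zero]
  obtain ⟨hSe, hSsum⟩ := ltsum_dvd hee_dvd hXF hYF (List.ofFn Rf) S hSum
    (fun g hg => by
      obtain ⟨i, rfl⟩ := List.mem_ofFn.mp hg
      exact hRf_e i)
  have hS_ee : DvdAll (e * e) S := by
    intro n
    have h1 := hSsum n
    have h2 : ((List.ofFn Rf).map fun g => coeff n g).sum = ∑ i, coeff n (Rf i) := by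
      rw [List.map_ofFn, Fin.sum_ofFn]
      rfl
    rw [h2] at h1
    have h3 : coeff n S = (coeff n S - ∑ i, coeff n (Rf i)) + ∑ i, coeff n (Rf i) := by
      ring
    rw [h3]
    exact dvd_add h1 (hsum_ee n)
  -- final assembly
  intro n
  rw [sq]
  apply dvd_of_approx hee_dvd
  intro N
  obtain ⟨M₀, hM⟩ := hTfS n N
  refine ⟨_, ?_, hM M₀ le_rfl⟩
  apply Finset.dvd_sum; intro i _
  apply Finset.dvd_sum; intro j _
  by_cases hi0 : i = 0
  · subst hi0
    by_cases hj0 : j = 0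
    · subst hj0
      rw [hXF 0]
      simp
    · exact ((dvdAll_mul_of_right (dvdAll_pow hm_ee (by omega))) n).mul_left _
  · exact ((dvdAll_mul_of_left (dvdAll_pow hS_ee (by omega))) n).mul_left _

end Coleman
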